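/- Let U ⊆ ℝ^d be a finite set and f : U → ℝ≥0. Then the sum over w ∈ U + U of max{f(u) : u ∈ U, w − u ∈ U} is at least ((rank(U) + 1)/2) · Σ_{u ∈ U} f(u). -/

import Mathlib

open Classical Pointwise

set_option maxHeartbeats 1000000

/-- The rank of a finite set `X ⊆ ℝ^d`: the minimum dimension of an affine
subspace containing `X`. -/
noncomputable def affRank {d : ℕ} (X : Finset (Fin d → ℝ)) : ℕ :=
  Module.finrank ℝ (affineSpan ℝ (X : Set (Fin d → ℝ))).direction

lemma affRank_eq_finrank_vectorSpan {d : ℕ} (X : Finset (Fin d → ℝ)) :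
    affRank X = Module.finrank ℝ (vectorSpan ℝ (X : Set (Fin d → ℝ))) := by
  rw [affRank, direction_affineSpan]

lemma affRank_lt_card {d : ℕ} {X : Finset (Fin d → ℝ)} (hX : X.Nonempty) :
    affRank X < X.card := by
  obtain ⟨p, hp⟩ := hX
  have h1 : vectorSpan ℝ (X : Set (Fin d → ℝ)) =
      Submodule.span ℝ ((((X.erase p).image (fun x => x -ᵥ p)) : Finset (Fin d → ℝ)) : Set _) := by
    rw [vectorSpan_eq_span_vsub_set_right_ne ℝ (Finset.mem_coe.2 hp), Finset.coe_image,
      Finset.coe_erase]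
  have h2 : Module.finrank ℝ (vectorSpan ℝ (X : Set (Fin d → ℝ))) ≤
      ((X.erase p).image (fun x => x -ᵥ p)).card := by
    rw [h1]; exact finrank_span_finset_le_card _
  have h3 : ((X.erase p).image (fun x => x -ᵥ p)).card ≤ (X.erase p).card :=
    Finset.card_image_le
  have h4 : (X.erase p).card = X.card - 1 := Finset.card_erase_of_mem hp
  have h5 : 1 ≤ X.card := Finset.card_pos.2 ⟨p, hp⟩
  rw [affRank_eq_finrank_vectorSpan]
  omega

lemma affRank_mono {d : ℕ} {X Y : Finset (Fin d → ℝ)} (h : X ⊆ Y) : affRank X ≤ affRank Y :=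
  Submodule.finrank_mono (AffineSubspace.direction_le (affineSpan_mono ℝ (by exact_mod_cast h)))

lemma affRank_insert_of_mem_affineSpan {d : ℕ} {X : Finset (Fin d → ℝ)} {v : Fin d → ℝ}
    (hv : v ∈ affineSpan ℝ (X : Set (Fin d → ℝ))) : affRank (insert v X) = affRank X := by
  rw [affRank, affRank, Finset.coe_insert, affineSpan_insert_eq_affineSpan ℝ hv]

lemma affRank_insert_of_not_mem_affineSpan {d : ℕ} {X : Finset (Fin d → ℝ)} {v : Fin d → ℝ}
    (hX : X.Nonempty) (hv : v ∉ affineSpan ℝ (X : Set (Fin d → ℝ))) :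
    affRank (insert v X) = affRank X + 1 := by
  obtain ⟨p, hp⟩ := hX
  have hle : affRank (insert v X) ≤ affRank X + 1 := by
    rw [affRank_eq_finrank_vectorSpan, affRank_eq_finrank_vectorSpan, Finset.coe_insert]
    exact finrank_vectorSpan_insert_le_set ℝ _ _
  have hlt : affRank X < affRank (insert v X) := by
    rw [affRank, affRank]
    apply Submodule.finrank_lt_finrank_of_lt
    refine lt_of_le_of_ne (AffineSubspace.direction_le (affineSpan_mono ℝ ?_)) ?_
    · rw [Finset.coe_insert]; exact Set.subset_insert _ _
    intro heq
    apply hv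
    have hmemv : v ∈ affineSpan ℝ ((insert v X : Finset (Fin d → ℝ)) : Set (Fin d → ℝ)) :=
      mem_affineSpan ℝ (by rw [Finset.coe_insert]; exact Set.mem_insert _ _)
    have hmemp : p ∈ affineSpan ℝ ((insert v X : Finset (Fin d → ℝ)) : Set (Fin d → ℝ)) :=
      mem_affineSpan ℝ (by rw [Finset.coe_insert]; exact Set.mem_insert_of_mem _ hp)
    have hvp : v -ᵥ p ∈ (affineSpan ℝ ((insert v X : Finset (Fin d → ℝ)) : Set _)).direction :=
      AffineSubspace.vsub_mem_direction hmemv hmemp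
    rw [← heq] at hvp
    have := AffineSubspace.vadd_mem_of_mem_direction hvp (mem_affineSpan ℝ (Finset.mem_coe.2 hp))
    simpa using this
  omega

lemma sum_mul_self_pos {d : ℕ} {x : Fin d → ℝ} (hx : x ≠ 0) : 0 < ∑ i, x i * x i := by
  have ⟨i, hi⟩ : ∃ i, x i ≠ 0 := by
    by_contra h
    push_neg at h
    exact hx (funext h)
  exact Finset.sum_pos' (fun j _ => mul_self_nonneg _) ⟨i, Finset.mem_univ i, mul_self_pos.2 hi⟩

lemma exists_exposed {d : ℕ} {U : Finset (Fin d → ℝ)} (hU : U.Nonempty) :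
    ∃ v ∈ U, ∃ ψ : (Fin d → ℝ) →ₗ[ℝ] ℝ, ∀ u ∈ U, u ≠ v → 0 < ψ (u - v) := by
  obtain ⟨v, hv, hmax⟩ := U.exists_max_image (fun u => ∑ i, u i * u i) hU
  refine ⟨v, hv, ∑ i, (-(v i)) • (LinearMap.proj i : (Fin d → ℝ) →ₗ[ℝ] ℝ), fun u hu hne => ?_⟩
  have happ : ∀ x : Fin d → ℝ,
      (∑ i, (-(v i)) • (LinearMap.proj i : (Fin d → ℝ) →ₗ[ℝ] ℝ)) x = ∑ i, (-(v i)) * x i := by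
    intro x
    simp [LinearMap.sum_apply]
  rw [happ]
  have hQ : ∑ i, u i * u i ≤ ∑ i, v i * v i := hmax u hu
  have hpos : 0 < ∑ i, (u - v) i * (u - v) i :=
    sum_mul_self_pos (sub_ne_zero.2 hne)
  have hexp : ∑ i, (u - v) i * (u - v) i =
      (∑ i, u i * u i) - 2 * (∑ i, v i * u i) + ∑ i, v i * v i := by
    rw [Finset.mul_sum, ← Finset.sum_sub_distrib, ← Finset.sum_add_distrib]
    exact Finset.sum_congr rfl fun i _ => by simp [Pi.sub_apply]; ring
  have hlin : ∑ i, (-(v i)) * (u - v) i = (∑ i, v i * v i) - ∑ i, v i * u i := by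
    rw [← Finset.sum_sub_distrib]
    exact Finset.sum_congr rfl fun i _ => by simp [Pi.sub_apply]; ring
  rw [hlin]
  linarith [hexp ▸ hpos]

lemma good_points {d : ℕ} {U' : Finset (Fin d → ℝ)} {v : Fin d → ℝ}
    (hne : U'.Nonempty)
    (ψ : (Fin d → ℝ) →ₗ[ℝ] ℝ) (hsep : ∀ u ∈ U', 0 < ψ (u - v)) :
    ∃ G : Finset (Fin d → ℝ), G ⊆ U' ∧ affRank (insert v U') ≤ G.card ∧
      ∀ u ∈ insert v G, v + u ∉ U' + U' := by
  classical
  have hv : v ∉ U' := fun h => by simpa using hsep v h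
  set nf : (Fin d → ℝ) → (Fin d → ℝ) := fun u => (ψ (u - v))⁻¹ • (u - v) with hnf_def
  set S' : Finset (Fin d → ℝ) := U'.image nf with hS'_def
  set Q : Set (Fin d → ℝ) := convexHull ℝ (S' : Set (Fin d → ℝ)) with hQ_def
  set E : Set (Fin d → ℝ) := Q.extremePoints ℝ with hE_def
  have hψnf : ∀ u ∈ U', ψ (nf u) = 1 := by
    intro u hu
    simp only [hnf_def, map_smul, smul_eq_mul]
    exact inv_mul_cancel₀ (ne_of_gt (hsep u hu))
  have hback : ∀ u ∈ U', u - v = ψ (u - v) • nf u := fun u hu =>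
    (smul_inv_smul₀ (ne_of_gt (hsep u hu)) _).symm
  -- span of S' equals vectorSpan of insert v U'
  have hins : v ∈ ((insert v U' : Finset (Fin d → ℝ)) : Set (Fin d → ℝ)) := by simp
  have hsetminus : (((insert v U' : Finset (Fin d → ℝ)) : Set (Fin d → ℝ)) \ {v})
      = (U' : Set (Fin d → ℝ)) := by
    rw [Finset.coe_insert]
    exact Set.insert_diff_self_of_notMem (by simpa using hv)
  have hspan : Submodule.span ℝ (S' : Set (Fin d → ℝ))
      = vectorSpan ℝ ((insert v U' : Finset (Fin d → ℝ)) : Set (Fin d → ℝ)) := by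
    rw [vectorSpan_eq_span_vsub_set_right_ne ℝ hins, hsetminus]
    apply le_antisymm
    · rw [Submodule.span_le]
      rintro x hx
      rw [Finset.mem_coe, Finset.mem_image] at hx
      obtain ⟨u, hu, rfl⟩ := hx
      have : u -ᵥ v ∈ Submodule.span ℝ ((fun x => x -ᵥ v) '' (U' : Set (Fin d → ℝ))) :=
        Submodule.subset_span ⟨u, hu, rfl⟩
      have h2 := Submodule.smul_mem _ ((ψ (u - v))⁻¹) this
      simpa [hnf_def, vsub_eq_sub] using h2
    · rw [Submodule.span_le]
      rintro x ⟨u, hu, rfl⟩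
      have : nf u ∈ Submodule.span ℝ (S' : Set (Fin d → ℝ)) :=
        Submodule.subset_span (by
          rw [Finset.mem_coe, hS'_def, Finset.mem_image]; exact ⟨u, hu, rfl⟩)
      have h2 := Submodule.smul_mem _ (ψ (u - v)) this
      rw [← hback u hu] at h2
      simpa [vsub_eq_sub] using h2
  -- vectorSpan of S' is inside ker ψ
  have hker : vectorSpan ℝ (S' : Set (Fin d → ℝ)) ≤ LinearMap.ker ψ := by
    rw [vectorSpan_def, Submodule.span_le]
    rintro x hx
    rw [Set.mem_vsub] at hx
    obtain ⟨y, hy, z, hz, rfl⟩ := hx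
    rw [Finset.mem_coe, Finset.mem_image] at hy hz
    obtain ⟨uy, huy, rfl⟩ := hy
    obtain ⟨uz, huz, rfl⟩ := hz
    simp only [SetLike.mem_coe, LinearMap.mem_ker, vsub_eq_sub, map_sub]
    rw [hψnf uy huy, hψnf uz huz, sub_self]
  obtain ⟨u₀, hu₀⟩ := hne
  have hs₀mem : nf u₀ ∈ (S' : Set (Fin d → ℝ)) := by
    rw [Finset.mem_coe, hS'_def, Finset.mem_image]; exact ⟨u₀, hu₀, rfl⟩
  have hs₀ψ : ψ (nf u₀) = 1 := hψnf u₀ hu₀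
  have hs₀ne : nf u₀ ≠ 0 := fun h => by rw [h, map_zero] at hs₀ψ; exact one_ne_zero hs₀ψ.symm
  set r : ℕ := affRank (insert v U') with hr_def
  have hrS : Module.finrank ℝ (Submodule.span ℝ (S' : Set (Fin d → ℝ))) = r := by
    rw [hspan, hr_def, affRank_eq_finrank_vectorSpan]
  have hsup : Submodule.span ℝ (S' : Set (Fin d → ℝ)) ≤
      vectorSpan ℝ (S' : Set (Fin d → ℝ)) ⊔ Submodule.span ℝ {nf u₀} := by
    rw [Submodule.span_le]
    intro x hx
    rw [SetLike.mem_coe, Submodule.mem_sup]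
    exact ⟨x -ᵥ nf u₀, vsub_mem_vectorSpan ℝ hx hs₀mem, nf u₀,
      Submodule.mem_span_singleton_self _, by simp [vsub_eq_sub]⟩
  have h1 : r ≤ Module.finrank ℝ (vectorSpan ℝ (S' : Set (Fin d → ℝ))) + 1 := by
    rw [← hrS]
    calc Module.finrank ℝ (Submodule.span ℝ (S' : Set (Fin d → ℝ)))
        ≤ Module.finrank ℝ ((vectorSpan ℝ (S' : Set (Fin d → ℝ)) ⊔ Submodule.span ℝ {nf u₀} : Submodule ℝ (Fin d → ℝ))) :=
          Submodule.finrank_mono hsup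
      _ ≤ Module.finrank ℝ (vectorSpan ℝ (S' : Set (Fin d → ℝ)))
          + Module.finrank ℝ (Submodule.span ℝ {nf u₀}) :=
          Submodule.finrank_add_le_finrank_add_finrank _ _
      _ = Module.finrank ℝ (vectorSpan ℝ (S' : Set (Fin d → ℝ))) + 1 := by
          rw [finrank_span_singleton hs₀ne]
  have h2 : Module.finrank ℝ (vectorSpan ℝ (S' : Set (Fin d → ℝ))) < r := by
    rw [← hrS]
    apply Submodule.finrank_lt_finrank_of_lt
    refine lt_of_le_of_ne ?_ ?_
    · rw [vectorSpan_def, Submodule.span_le]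
      rintro x hx
      rw [Set.mem_vsub] at hx
      obtain ⟨y, hy, z, hz, rfl⟩ := hx
      exact Submodule.sub_mem _ (Submodule.subset_span hy) (Submodule.subset_span hz)
    · intro heq
      have : nf u₀ ∈ vectorSpan ℝ (S' : Set (Fin d → ℝ)) := by
        rw [heq]; exact Submodule.subset_span hs₀mem
      have := hker this
      rw [LinearMap.mem_ker, hs₀ψ] at this
      exact one_ne_zero this
  -- Krein-Milman
  have hQcp : IsCompact Q := S'.finite_toSet.isCompact_convexHull ℝ
  have hQcv : Convex ℝ Q := convex_convexHull ℝ _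
  have hEfin : E.Finite := S'.finite_toSet.subset extremePoints_convexHull_subset
  have hconvE : convexHull ℝ E = Q := by
    have := closure_convexHull_extremePoints hQcp hQcv
    rw [← hE_def] at this
    rw [← this, (hEfin.isClosed_convexHull ℝ).closure_eq]
  have hEspan : vectorSpan ℝ E = vectorSpan ℝ (S' : Set (Fin d → ℝ)) := by
    rw [← direction_affineSpan, ← direction_affineSpan ℝ (S' : Set (Fin d → ℝ))]
    congr 1
    rw [← affineSpan_convexHull (s := E), hconvE, hQ_def, affineSpan_convexHull]
  set Efin : Finset (Fin d → ℝ) := S'.filter (· ∈ E) with hEfin_def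
  have hEcoe : (Efin : Set (Fin d → ℝ)) = E := by
    ext x
    simp only [hEfin_def, Finset.coe_filter, Set.mem_setOf_eq, Finset.mem_coe]
    exact ⟨fun h => h.2, fun h => ⟨Finset.mem_coe.1 (extremePoints_convexHull_subset h), h⟩⟩
  have hEne : Efin.Nonempty := by
    have hQne : Q.Nonempty := ⟨nf u₀, subset_convexHull ℝ _ hs₀mem⟩
    rw [← hconvE, convexHull_nonempty_iff] at hQne
    obtain ⟨x, hx⟩ := hQne
    exact ⟨x, by rw [← Finset.mem_coe, hEcoe]; exact hx⟩
  have hcardE : r ≤ Efin.card := by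
    have := affRank_lt_card hEne
    rw [affRank_eq_finrank_vectorSpan, hEcoe, hEspan] at this
    omega
  -- the good set
  set G : Finset (Fin d → ℝ) := U'.filter
    (fun u => nf u ∈ E ∧ ∀ u' ∈ U', nf u' = nf u → ψ (u - v) ≤ ψ (u' - v)) with hG_def
  have hGsub : G ⊆ U' := Finset.filter_subset _ _
  have hEsubim : Efin ⊆ G.image nf := by
    intro q hq
    rw [hEfin_def, Finset.mem_filter] at hq
    obtain ⟨hqS, hqE⟩ := hq
    rw [hS'_def, Finset.mem_image] at hqS
    obtain ⟨u, hu, hunf⟩ := hqS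
    have hTne : (U'.filter (fun u' => nf u' = q)).Nonempty := ⟨u, Finset.mem_filter.2 ⟨hu, hunf⟩⟩
    obtain ⟨m, hmT, hmin⟩ :=
      (U'.filter (fun u' => nf u' = q)).exists_min_image (fun u' => ψ (u' - v)) hTne
    rw [Finset.mem_filter] at hmT
    rw [Finset.mem_image]
    refine ⟨m, ?_, hmT.2⟩
    rw [hG_def, Finset.mem_filter]
    refine ⟨hmT.1, by rw [hmT.2]; exact hqE, fun u' hu' hnfeq => ?_⟩
    exact hmin u' (Finset.mem_filter.2 ⟨hu', by rw [hnfeq, hmT.2]⟩)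
  have hcardG : r ≤ G.card :=
    hcardE.trans ((Finset.card_le_card hEsubim).trans Finset.card_image_le)
  refine ⟨G, hGsub, hcardG, ?_⟩
  -- goodness
  intro u hu hmem
  rw [Finset.mem_add] at hmem
  obtain ⟨a, ha, b, hb, hab⟩ := hmem
  have hca : 0 < ψ (a - v) := hsep a ha
  have hcb : 0 < ψ (b - v) := hsep b hb
  have hsum : (a - v) + (b - v) = u - v := by linear_combination hab
  have hψsum : ψ (a - v) + ψ (b - v) = ψ (u - v) := by
    rw [← map_add, hsum]
  rcases Finset.mem_insert.1 hu with rfl | huG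
  · rw [sub_self, map_zero] at hψsum
    linarith
  · rw [hG_def, Finset.mem_filter] at huG
    obtain ⟨huU, hunfE, humin⟩ := huG
    have hc : 0 < ψ (u - v) := hsep u huU
    have hca' : ψ (a - v) ≠ 0 := ne_of_gt hca
    have hcb' : ψ (b - v) ≠ 0 := ne_of_gt hcb
    have hc' : ψ (u - v) ≠ 0 := ne_of_gt hc
    have hseg : nf u ∈ openSegment ℝ (nf a) (nf b) := by
      refine ⟨ψ (a - v) / ψ (u - v), ψ (b - v) / ψ (u - v),
        div_pos hca hc, div_pos hcb hc,
        by rw [← add_div, hψsum, div_self hc'], ?_⟩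
      have e0 : ∀ x : ℝ, x ≠ 0 → x / ψ (u - v) * x⁻¹ = (ψ (u - v))⁻¹ := fun x hx => by
        rw [div_mul_eq_mul_div, mul_inv_cancel₀ hx, one_div]
      have e1 : (ψ (a - v) / ψ (u - v)) • nf a = (ψ (u - v))⁻¹ • (a - v) := by
        rw [hnf_def, smul_smul, e0 _ hca']
      have e2 : (ψ (b - v) / ψ (u - v)) • nf b = (ψ (u - v))⁻¹ • (b - v) := by
        rw [hnf_def, smul_smul, e0 _ hcb']
      rw [e1, e2, ← smul_add, hsum]
    have hamem : nf a ∈ Q := subset_convexHull ℝ _ (by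
      rw [Finset.mem_coe, hS'_def, Finset.mem_image]; exact ⟨a, ha, rfl⟩)
    have hbmem : nf b ∈ Q := subset_convexHull ℝ _ (by
      rw [Finset.mem_coe, hS'_def, Finset.mem_image]; exact ⟨b, hb, rfl⟩)
    obtain ⟨hanf, -⟩ := (mem_extremePoints.1 hunfE).2 (nf a) hamem (nf b) hbmem hseg
    have : ψ (u - v) ≤ ψ (a - v) := humin a ha hanf
    linarith

lemma freiman_aux {d : ℕ} (f : (Fin d → ℝ) → NNReal) :
    ∀ (n : ℕ) (U : Finset (Fin d → ℝ)), U.card ≤ n →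
    ((affRank U : ℝ) + 1) / 2 * ∑ u ∈ U, (f u : ℝ) ≤
      ∑ w ∈ U + U, (((U.filter fun u => w - u ∈ U).sup f : NNReal) : ℝ) := by
  intro n
  induction n with
  | zero =>
    intro U hU
    rw [Finset.card_eq_zero.1 (Nat.le_zero.1 hU)]
    simp
  | succ n ih =>
    intro U hcard
    rcases U.eq_empty_or_nonempty with rfl | hUne
    · simp
    obtain ⟨v, hvU, ψ, hψ⟩ := exists_exposed hUne
    set U' : Finset (Fin d → ℝ) := U.erase v with hU'def
    have hUins : U = insert v U' := (Finset.insert_erase hvU).symm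
    have hsub : U' ⊆ U := Finset.erase_subset _ _
    have hvU' : v ∉ U' := Finset.notMem_erase _ _
    have hcard' : U'.card ≤ n := by
      have h1 : U'.card = U.card - 1 := Finset.card_erase_of_mem hvU
      have h2 : 1 ≤ U.card := Finset.card_pos.2 hUne
      omega
    have IH := ih U' hcard'
    -- abbreviations
    set M : (Fin d → ℝ) → ℝ := fun w => (((U.filter fun u => w - u ∈ U).sup f : NNReal) : ℝ)
      with hM_def
    set M' : (Fin d → ℝ) → ℝ := fun w => (((U'.filter fun u => w - u ∈ U').sup f : NNReal) : ℝ)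
      with hM'_def
    have hM_nonneg : ∀ w, 0 ≤ M w := fun w => NNReal.coe_nonneg _
    have hM'leM : ∀ w, M' w ≤ M w := by
      intro w
      rw [hM_def, hM'_def]
      beta_reduce
      norm_cast
      apply Finset.sup_mono
      intro x hx
      rw [Finset.mem_filter] at hx ⊢
      exact ⟨hsub hx.1, hsub hx.2⟩
    have hfleM : ∀ x u, x ∈ U → u ∈ U → (f x : ℝ) ≤ M (x + u) := by
      intro x u hx hu
      rw [hM_def]
      beta_reduce
      norm_cast
      apply Finset.le_sup
      rw [Finset.mem_filter]
      exact ⟨hx, by rwa [add_sub_cancel_left]⟩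
    have hfleM' : ∀ x u, x ∈ U → u ∈ U → (f u : ℝ) ≤ M (x + u) := by
      intro x u hx hu
      rw [hM_def]
      beta_reduce
      norm_cast
      apply Finset.le_sup
      rw [Finset.mem_filter]
      exact ⟨hu, by rwa [add_sub_cancel_right]⟩
    -- key summation step
    have key : ∀ N : Finset (Fin d → ℝ), N ⊆ U + U → (∀ w ∈ N, w ∉ U' + U') →
        (∑ w ∈ U' + U', M' w) + ∑ w ∈ N, M w ≤ ∑ w ∈ U + U, M w := by
      intro N hNsub hNdis
      have hdisj : Disjoint (U' + U') N := by
        rw [Finset.disjoint_right]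
        exact hNdis
      calc (∑ w ∈ U' + U', M' w) + ∑ w ∈ N, M w
          ≤ (∑ w ∈ U' + U', M w) + ∑ w ∈ N, M w := by
            gcongr with w hw
            exact hM'leM w
        _ = ∑ w ∈ (U' + U') ∪ N, M w := (Finset.sum_union hdisj).symm
        _ ≤ ∑ w ∈ U + U, M w := by
            apply Finset.sum_le_sum_of_subset_of_nonneg
            · apply Finset.union_subset _ hNsub
              exact Finset.add_subset_add hsub hsub
            · intro w _ _
              exact hM_nonneg w
    have hFsplit : ∑ u ∈ U, (f u : ℝ) = (f v : ℝ) + ∑ u ∈ U', (f u : ℝ) :=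
      (Finset.add_sum_erase U (fun u => (f u : ℝ)) hvU).symm
    have hfv0 : (0 : ℝ) ≤ (f v : ℝ) := NNReal.coe_nonneg _
    have hF'0 : (0 : ℝ) ≤ ∑ u ∈ U', (f u : ℝ) :=
      Finset.sum_nonneg fun u _ => NNReal.coe_nonneg _
    rcases U'.eq_empty_or_nonempty with hU'e | hU'ne
    · -- singleton case
      have hUsing : U = {v} := by rw [hUins, hU'e]; rfl
      have hr0 : affRank U = 0 := by
        have h1 := affRank_lt_card hUne
        have hc1 : U.card = 1 := by rw [hUsing]; exact Finset.card_singleton v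
        omega
      rw [hr0, hUsing]
      have : ({v} : Finset (Fin d → ℝ)) + {v} = {v + v} := by
        rw [Finset.singleton_add_singleton]
      rw [this, Finset.sum_singleton, Finset.sum_singleton]
      have := hfleM v v hvU hvU
      push_cast
      linarith
    by_cases hmem : v ∈ affineSpan ℝ (U' : Set (Fin d → ℝ))
    · -- Case A : rank does not drop
      have haffeq : affRank U = affRank U' := by
        rw [hUins]; exact affRank_insert_of_mem_affineSpan hmem
      have hsep' : ∀ u ∈ U', 0 < ψ (u - v) := fun u hu =>
        hψ u (hsub hu) (Finset.ne_of_mem_erase hu)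
      obtain ⟨G, hGsub, hGcard, hGgood⟩ := good_points hU'ne ψ hsep'
      rw [← hUins] at hGcard
      set N : Finset (Fin d → ℝ) := (insert v G).image (fun u => v + u) with hN_def
      have hNsub : N ⊆ U + U := by
        intro w hw
        rw [hN_def, Finset.mem_image] at hw
        obtain ⟨u, hu, rfl⟩ := hw
        have huU : u ∈ U := by
          rcases Finset.mem_insert.1 hu with rfl | h
          · exact hvU
          · exact hsub (hGsub h)
        exact Finset.add_mem_add hvU huU
      have hNdis : ∀ w ∈ N, w ∉ U' + U' := by
        intro w hw
        rw [hN_def, Finset.mem_image] at hw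
        obtain ⟨u, hu, rfl⟩ := hw
        exact hGgood u hu
      have hNcard : affRank U + 1 ≤ N.card := by
        rw [hN_def, Finset.card_image_of_injective _ (add_right_injective v),
          Finset.card_insert_of_notMem (fun h => hvU' (hGsub h))]
        omega
      have hNlb : (affRank U + 1 : ℝ) * (f v : ℝ) ≤ ∑ w ∈ N, M w := by
        have h1 : ∀ w ∈ N, (f v : ℝ) ≤ M w := by
          intro w hw
          rw [hN_def, Finset.mem_image] at hw
          obtain ⟨u, hu, rfl⟩ := hw
          have huU : u ∈ U := by
            rcases Finset.mem_insert.1 hu with rfl | h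
            · exact hvU
            · exact hsub (hGsub h)
          exact hfleM v u hvU huU
        calc (affRank U + 1 : ℝ) * (f v : ℝ) ≤ (N.card : ℝ) * (f v : ℝ) := by
              apply mul_le_mul_of_nonneg_right _ hfv0
              exact_mod_cast hNcard
          _ = ∑ _w ∈ N, (f v : ℝ) := by rw [Finset.sum_const, nsmul_eq_mul]
          _ ≤ ∑ w ∈ N, M w := Finset.sum_le_sum h1
      have htotal := key N hNsub hNdis
      rw [haffeq] at *
      set R : ℝ := (affRank U' : ℝ) with hR_def
      have hR0 : 0 ≤ R := by rw [hR_def]; positivity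
      rw [hFsplit]
      have hIH : (R + 1) / 2 * ∑ u ∈ U', (f u : ℝ) ≤ ∑ w ∈ U' + U', M' w := IH
      nlinarith [hNlb, htotal, hIH]
    · -- Case B : rank drops
      have haffeq : affRank U = affRank U' + 1 := by
        rw [hUins]; exact affRank_insert_of_not_mem_affineSpan hU'ne hmem
      set N : Finset (Fin d → ℝ) := U.image (fun u => v + u) with hN_def
      have hNsub : N ⊆ U + U := by
        intro w hw
        rw [hN_def, Finset.mem_image] at hw
        obtain ⟨u, hu, rfl⟩ := hw
        exact Finset.add_mem_add hvU hu
      have hNdis : ∀ w ∈ N, w ∉ U' + U' := by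
        intro w hw hmem2
        rw [hN_def, Finset.mem_image] at hw
        obtain ⟨u, hu, rfl⟩ := hw
        rw [Finset.mem_add] at hmem2
        obtain ⟨a, ha, b, hb, hab⟩ := hmem2
        have haS : a ∈ affineSpan ℝ (U' : Set (Fin d → ℝ)) :=
          mem_affineSpan ℝ (Finset.mem_coe.2 ha)
        have hbS : b ∈ affineSpan ℝ (U' : Set (Fin d → ℝ)) :=
          mem_affineSpan ℝ (Finset.mem_coe.2 hb)
        apply hmem
        rcases Finset.mem_insert.1 (hUins ▸ hu) with huv | huU'
        · -- u = v : v is the midpoint of a and b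
          have hveq : ((2⁻¹ : ℝ) • (a -ᵥ b)) +ᵥ b = v := by
            have : a + b = v + v := by rw [huv] at hab; exact hab
            funext i
            have hi := congrFun this i
            simp only [Pi.add_apply] at hi
            simp only [vadd_eq_add, vsub_eq_sub, Pi.add_apply, Pi.smul_apply, Pi.sub_apply,
              smul_eq_mul]
            linarith
          rw [← hveq]
          exact AffineSubspace.vadd_mem_of_mem_direction
            (Submodule.smul_mem _ _ (AffineSubspace.vsub_mem_direction haS hbS)) hbS
        · -- u ∈ U'
          have huS : u ∈ affineSpan ℝ (U' : Set (Fin d → ℝ)) :=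
            mem_affineSpan ℝ (Finset.mem_coe.2 huU')
          have hveq : (a -ᵥ u) +ᵥ b = v := by
            funext i
            have hi := congrFun hab i
            simp only [Pi.add_apply] at hi
            simp only [vadd_eq_add, vsub_eq_sub, Pi.add_apply, Pi.sub_apply]
            linarith
          rw [← hveq]
          exact AffineSubspace.vadd_mem_of_mem_direction
            (AffineSubspace.vsub_mem_direction haS huS) hbS
      have hNsum : ∑ w ∈ N, M w = ∑ u ∈ U, M (v + u) := by
        rw [hN_def]
        exact Finset.sum_image (fun x _ y _ h => by exact add_left_cancel h)
      have hNlb : ((U.card : ℝ) * (f v : ℝ) + ∑ u ∈ U, (f u : ℝ)) / 2 ≤ ∑ w ∈ N, M w := by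
        rw [hNsum]
        have h1 : ∀ u ∈ U, ((f v : ℝ) + (f u : ℝ)) / 2 ≤ M (v + u) := by
          intro u hu
          have := hfleM v u hvU hu
          have := hfleM' v u hvU hu
          linarith
        calc ((U.card : ℝ) * (f v : ℝ) + ∑ u ∈ U, (f u : ℝ)) / 2
            = ∑ u ∈ U, ((f v : ℝ) + (f u : ℝ)) / 2 := by
              rw [← Finset.sum_div, Finset.sum_add_distrib, Finset.sum_const, nsmul_eq_mul]
          _ ≤ ∑ u ∈ U, M (v + u) := Finset.sum_le_sum h1
      have htotal := key N hNsub hNdis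
      have hcardU' : (affRank U' : ℝ) + 1 ≤ (U'.card : ℝ) := by
        exact_mod_cast affRank_lt_card hU'ne
      have hcardUU' : (U.card : ℝ) = (U'.card : ℝ) + 1 := by
        have h1 : U'.card = U.card - 1 := Finset.card_erase_of_mem hvU
        have h2 : 1 ≤ U.card := Finset.card_pos.2 hUne
        have h3 : U.card = U'.card + 1 := by omega
        exact_mod_cast h3
      rw [haffeq, hFsplit]
      set R : ℝ := (affRank U' : ℝ) with hR_def
      have hR0 : 0 ≤ R := by rw [hR_def]; positivity
      have hIH : (R + 1) / 2 * ∑ u ∈ U', (f u : ℝ) ≤ ∑ w ∈ U' + U', M' w := IH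
      push_cast
      rw [hFsplit] at hNlb
      nlinarith [hNlb, htotal, hIH, hcardU', hcardUU']

/-- Weighted Freĭman lemma: for finite `U ⊆ ℝ^d` and `f : U → ℝ≥0`,
`∑_{w ∈ U+U} max{f(u) : u ∈ U, w − u ∈ U} ≥ ((rank(U) + 1)/2) ∑_{u ∈ U} f(u)`. -/
theorem weighted_freiman (d : ℕ) (U : Finset (Fin d → ℝ)) (f : (Fin d → ℝ) → NNReal) :
    ((affRank U : ℝ) + 1) / 2 * ∑ u ∈ U, (f u : ℝ) ≤
      ∑ w ∈ U + U, (((U.filter fun u => w - u ∈ U).sup f : NNReal) : ℝ) :=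
  freiman_aux f U.card U le_rfl
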